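/- arXiv:1908.00872 — 4 statements merged into one kernel-verified Lean document; each statement's English description precedes it below -/
import Mathlib

section
/- Let X be an n×n doubly stochastic matrix, V an n×(n−1) matrix with orthonormal columns spanning e^⊥, Y = V^T X V, and y = vec(Y). Then for symmetric matrices A, B ∈ ℝ^{n×n}, tr(A X B X^T) = ⟨Ṽ B ⊗ Ṽ A, yy^T⟩ + (2/n) vec(V^T B J A V)^T y + (1/n²)(e^T A e)(e^T B e), where Ṽ A = V^T A V, Ṽ B = V^T B V and J = ee^T. More precisely: tr(A X B X^T) = tr(ÃYB̃Y^T) + (2/n)tr(B J A V Y V^T) + (1/n²)(e^T A e)(e^T B e), where Ã = V^T A V, B̃ = V^T B V. -/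
open Matrix

/-- For a doubly stochastic `X` and symmetric `A, B`, with `Y = Vᵀ X V`:
`tr(A X B Xᵀ) = tr(Ã Y B̃ Yᵀ) + (2/n) tr(B J A V Y Vᵀ) + (1/n²)(eᵀAe)(eᵀBe)`. -/
theorem trace_decomposition (n : ℕ) (hn : 0 < n)
    (V : Matrix (Fin n) (Fin (n - 1)) ℝ)
    (hVV : Vᵀ * V = 1) (hVe : Vᵀ *ᵥ (fun _ => (1 : ℝ)) = 0)
    (X : Matrix (Fin n) (Fin n) ℝ) (hX0 : ∀ i j, 0 ≤ X i j)
    (hXr : X *ᵥ (fun _ => (1 : ℝ)) = fun _ => 1)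
    (hXc : Xᵀ *ᵥ (fun _ => (1 : ℝ)) = fun _ => 1)
    (A B : Matrix (Fin n) (Fin n) ℝ) (hA : A.IsSymm) (hB : B.IsSymm) :
    Matrix.trace (A * X * B * Xᵀ) =
      Matrix.trace ((Vᵀ * A * V) * (Vᵀ * X * V) * (Vᵀ * B * V) * (Vᵀ * X * V)ᵀ)
      + 2 / (n : ℝ) *
        Matrix.trace (B * (Matrix.of fun _ _ => (1 : ℝ)) * A * V * (Vᵀ * X * V) * Vᵀ)
      + 1 / (n : ℝ) ^ 2 * ((fun _ => (1 : ℝ)) ⬝ᵥ (A *ᵥ fun _ => (1 : ℝ)))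
        * ((fun _ => (1 : ℝ)) ⬝ᵥ (B *ᵥ fun _ => (1 : ℝ))) := by
  have hn' : (n : ℝ) ≠ 0 := Nat.cast_ne_zero.mpr hn.ne'
  set J : Matrix (Fin n) (Fin n) ℝ := Matrix.of fun _ _ => (1 : ℝ) with hJdef
  set c : ℝ := (n : ℝ)⁻¹ with hc
  have hJT : Jᵀ = J := by ext i j; simp [hJdef]
  have hXJ : X * J = J := by
    ext i j
    have := congrFun hXr i
    simpa [Matrix.mul_apply, hJdef, Matrix.mulVec, dotProduct] using this
  have hJX : J * X = J := by
    ext i j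
    have := congrFun hXc j
    simpa [Matrix.mul_apply, hJdef, Matrix.mulVec, dotProduct, Matrix.transpose_apply] using this
  have hJJ : J * J = (n : ℝ) • J := by
    ext i j
    simp [Matrix.mul_apply, hJdef, Finset.sum_const]
  have hVJ : Vᵀ * J = 0 := by
    ext i j
    have := congrFun hVe i
    simpa [Matrix.mul_apply, hJdef, Matrix.mulVec, dotProduct] using this
  have hJV : J * V = 0 := by
    have := congrArg Matrix.transpose hVJ
    simpa [Matrix.transpose_mul, hJT] using this
  -- Q = V * Vᵀ = 1 - c • J
  set Q : Matrix (Fin n) (Fin n) ℝ := V * Vᵀ with hQdef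
  have hQQ : Q * Q = Q := by
    rw [hQdef]
    calc V * Vᵀ * (V * Vᵀ) = V * (Vᵀ * V) * Vᵀ := by
          rw [Matrix.mul_assoc, Matrix.mul_assoc, Matrix.mul_assoc]
    _ = V * Vᵀ := by rw [hVV, Matrix.mul_one]
  have hQJ : Q * J = 0 := by
    rw [hQdef, Matrix.mul_assoc, hVJ, Matrix.mul_zero]
  have hJQ : J * Q = 0 := by
    rw [hQdef, ← Matrix.mul_assoc, hJV, Matrix.zero_mul]
  have hQT : Qᵀ = Q := by rw [hQdef]; simp [Matrix.transpose_mul]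
  set M : Matrix (Fin n) (Fin n) ℝ := 1 - c • J - Q with hMdef
  have hMT : Mᵀ = M := by
    rw [hMdef]; simp [Matrix.transpose_sub, Matrix.transpose_smul, hJT, hQT]
  have hMM : M * M = M := by
    rw [hMdef]
    simp only [Matrix.sub_mul, Matrix.mul_sub, Matrix.one_mul, Matrix.mul_one,
      Matrix.smul_mul, Matrix.mul_smul, hJJ, hQQ, hQJ, hJQ, smul_smul, smul_zero]
    simp only [hc, inv_mul_cancel₀ hn', mul_inv_cancel₀ hn', div_self hn', one_smul]
    module
  -- trace of M is zero
  have hcard : Fintype.card (Fin (n-1)) = n - 1 := Fintype.card_fin _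
  have hQtr : Matrix.trace Q = (n : ℝ) - 1 := by
    rw [hQdef, Matrix.trace_mul_comm, hVV, Matrix.trace_one, hcard]
    rw [Nat.cast_sub hn, Nat.cast_one]
  have hJtr : Matrix.trace J = (n : ℝ) := by
    simp [Matrix.trace, Matrix.diag, hJdef]
  have hMtr : Matrix.trace M = 0 := by
    rw [hMdef, Matrix.trace_sub, Matrix.trace_sub, Matrix.trace_smul, hJtr, hQtr,
      Matrix.trace_one]
    simp [hc, inv_mul_cancel₀ hn']
  have hM0 : M = 0 := by
    have h1 : Matrix.trace (M * Mᵀ) = 0 := by rw [hMT, hMM, hMtr]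
    have h2 : ∑ i, ∑ j, (M i j) ^ 2 = 0 := by
      rw [← h1]
      simp [Matrix.trace, Matrix.diag, Matrix.mul_apply, sq]
    ext i j
    have hnn : ∀ i ∈ Finset.univ, (0:ℝ) ≤ ∑ j, (M i j)^2 :=
      fun i _ => Finset.sum_nonneg (fun j _ => sq_nonneg _)
    have h3 := (Finset.sum_eq_zero_iff_of_nonneg hnn).mp h2 i (Finset.mem_univ i)
    have h4 := (Finset.sum_eq_zero_iff_of_nonneg
      (fun j _ => sq_nonneg (M i j))).mp h3 j (Finset.mem_univ j)
    have := pow_eq_zero_iff (n := 2) (by norm_num) |>.mp h4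
    simpa using this
  have hQ : Q = 1 - c • J := by
    have h := hM0
    rw [hMdef, sub_eq_zero] at h
    exact h.symm
  set Y : Matrix (Fin (n-1)) (Fin (n-1)) ℝ := Vᵀ * X * V with hYdef
  set N : Matrix (Fin n) (Fin n) ℝ := V * Y * Vᵀ with hNdef
  have hNX : N = X - c • J := by
    have h5 : N = Q * X * Q := by
      rw [hNdef, hYdef, hQdef]
      simp [Matrix.mul_assoc]
    rw [h5, hQ]
    simp only [Matrix.sub_mul, Matrix.mul_sub, Matrix.one_mul, Matrix.mul_one,
      Matrix.smul_mul, Matrix.mul_smul, hXJ, hJX, hJJ, smul_smul, smul_zero]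
    simp only [hc, inv_mul_cancel₀ hn', mul_inv_cancel₀ hn', one_smul]
    module
  have hXdec : X = c • J + N := by rw [hNX]; abel
  have hNT : Nᵀ = V * Yᵀ * Vᵀ := by
    rw [hNdef]; simp [Matrix.transpose_mul, Matrix.mul_assoc]
  have hXTdec : Xᵀ = c • J + Nᵀ := by
    rw [hXdec]; simp [Matrix.transpose_add, Matrix.transpose_smul, hJT]
  -- the four trace identities
  have t1 : Matrix.trace (A * N * B * Nᵀ)
      = Matrix.trace ((Vᵀ * A * V) * Y * (Vᵀ * B * V) * Yᵀ) := by
    have : A * N * B * Nᵀ = (A * V * Y * Vᵀ * B * V * Yᵀ) * Vᵀ := by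
      rw [hNdef, hNT]; simp [Matrix.mul_assoc]
    rw [this, Matrix.trace_mul_comm]
    simp [Matrix.mul_assoc]
  have t2 : Matrix.trace (A * N * B * J)
      = Matrix.trace (B * J * A * V * Y * Vᵀ) := by
    have h6 : A * N * B * J = (A * N) * (B * J) := by simp [Matrix.mul_assoc]
    have h7 : B * J * A * V * Y * Vᵀ = (B * J) * (A * N) := by
      rw [hNdef]; simp [Matrix.mul_assoc]
    rw [h6, h7, Matrix.trace_mul_comm]
  have t3 : Matrix.trace (A * J * B * Nᵀ)
      = Matrix.trace (B * J * A * V * Y * Vᵀ) := by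
    have h8 : (A * J * B * Nᵀ)ᵀ = N * (B * J * A) := by
      simp [Matrix.transpose_mul, hJT, hA.eq, hB.eq, Matrix.mul_assoc]
    rw [← Matrix.trace_transpose (A * J * B * Nᵀ), h8, Matrix.trace_mul_comm]
    rw [hNdef]; simp [Matrix.mul_assoc]
  have t4 : Matrix.trace (A * J * B * J)
      = ((fun _ => (1:ℝ)) ⬝ᵥ (A *ᵥ fun _ => (1:ℝ)))
        * ((fun _ => (1:ℝ)) ⬝ᵥ (B *ᵥ fun _ => (1:ℝ))) := by
    simp only [Matrix.trace, Matrix.diag, Matrix.mul_apply, hJdef, Matrix.of_apply,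
      dotProduct, Matrix.mulVec, mul_one, one_mul]
    have hB' : ∑ x1 : Fin n, ∑ x2 : Fin n, B x2 x1 = ∑ x : Fin n, ∑ x1 : Fin n, B x x1 :=
      Finset.sum_comm
    calc ∑ x : Fin n, ∑ x1 : Fin n, ∑ x2 : Fin n, (∑ x3 : Fin n, A x x3) * B x2 x1
        = ∑ x : Fin n, (∑ x3 : Fin n, A x x3) * ∑ x1 : Fin n, ∑ x2 : Fin n, B x2 x1 := by
          simp [Finset.mul_sum]
      _ = (∑ x : Fin n, ∑ x3 : Fin n, A x x3) * ∑ x1 : Fin n, ∑ x2 : Fin n, B x2 x1 := by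
          rw [Finset.sum_mul]
      _ = _ := by rw [hB']
  -- expand the LHS
  rw [show A * X * B * Xᵀ = A * X * B * (c • J + Nᵀ) from by rw [← hXTdec]]
  rw [show A * X = A * (c • J + N) from by rw [← hXdec]]
  simp only [Matrix.mul_add, Matrix.add_mul, Matrix.mul_smul, Matrix.smul_mul,
    Matrix.trace_add, Matrix.trace_smul, smul_eq_mul, smul_smul]
  rw [t1, t2, t3, t4, hc]
  field_simp
  ring
end

section
/- Let V be an n×(n−1) matrix with orthonormal columns spanning e^⊥. Then for any vector y ∈ ℝ^{(n−1)²} with (V ⊗ V)y ≥ −(1/n)(e ⊗ e) entrywise, the matrix X = (1/n)ee^T + VYV^T (where vec(Y) = y) is doubly stochastic, i.e., X ≥ 0 entrywise and Xe = X^T e = e. -/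
open Matrix Kronecker

/-- If `(V ⊗ V) y ≥ -(1/n) e ⊗ e` entrywise, then `X = (1/n) e eᵀ + V Y Vᵀ`
(with `vec Y = y`) is doubly stochastic. -/
theorem x_doubly_stochastic (n : ℕ) (hn : 0 < n)
    (V : Matrix (Fin n) (Fin (n - 1)) ℝ)
    (hVV : Vᵀ * V = 1) (hVe : Vᵀ *ᵥ (fun _ => (1 : ℝ)) = 0)
    (y : Fin (n - 1) × Fin (n - 1) → ℝ)
    (Y : Matrix (Fin (n - 1)) (Fin (n - 1)) ℝ) (hY : ∀ p, y p = Y p.1 p.2)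
    (hq : ∀ p : Fin n × Fin n, -(1 / (n : ℝ)) ≤ ((V ⊗ₖ V) *ᵥ y) p) :
    (∀ i j, 0 ≤ (((n : ℝ)⁻¹ • (Matrix.of fun _ _ => (1 : ℝ)) + V * Y * Vᵀ :
        Matrix (Fin n) (Fin n) ℝ)) i j) ∧
    (((n : ℝ)⁻¹ • (Matrix.of fun _ _ => (1 : ℝ)) + V * Y * Vᵀ) *ᵥ (fun _ => (1 : ℝ))
      = fun _ => 1) ∧
    (((n : ℝ)⁻¹ • (Matrix.of fun _ _ => (1 : ℝ)) + V * Y * Vᵀ)ᵀ *ᵥ (fun _ => (1 : ℝ))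
      = fun _ => 1) := by
  have hn' : (n : ℝ) ≠ 0 := Nat.cast_ne_zero.mpr hn.ne'
  have key : ∀ i j : Fin n, ((V ⊗ₖ V) *ᵥ y) (i, j) = (V * Y * Vᵀ) i j := by
    intro i j
    simp only [mulVec, dotProduct, kroneckerMap_apply, Fintype.sum_prod_type, hY,
      Matrix.mul_apply, transpose_apply, Finset.sum_mul]
    rw [Finset.sum_comm]
    exact Finset.sum_congr rfl fun k _ => Finset.sum_congr rfl fun l _ => by ring
  have hVte : Vᵀ *ᵥ (fun _ => (1 : ℝ)) = 0 := hVe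
  have hrow : (V * Y * Vᵀ) *ᵥ (fun _ => (1 : ℝ)) = 0 := by
    rw [← Matrix.mulVec_mulVec, ← Matrix.mulVec_mulVec, hVte, Matrix.mulVec_zero,
      Matrix.mulVec_zero]
  have hcol : (V * Y * Vᵀ)ᵀ *ᵥ (fun _ => (1 : ℝ)) = 0 := by
    rw [Matrix.transpose_mul, Matrix.transpose_mul, Matrix.transpose_transpose,
      ← Matrix.mulVec_mulVec, ← Matrix.mulVec_mulVec, hVte,
      Matrix.mulVec_zero, Matrix.mulVec_zero]
  have hJ : ∀ i : Fin n, (((Matrix.of fun _ _ => (1 : ℝ)) : Matrix (Fin n) (Fin n) ℝ) *ᵥ (fun _ => (1 : ℝ))) i = n := by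
    intro i
    simp [mulVec, dotProduct]
  refine ⟨?_, ?_, ?_⟩
  · intro i j
    have := hq (i, j)
    rw [key i j] at this
    simp only [Matrix.add_apply, Matrix.smul_apply, Matrix.of_apply, smul_eq_mul, mul_one]
    have : -(((n : ℝ))⁻¹) ≤ (V * Y * Vᵀ) i j := by
      rw [← one_div]; exact this
    linarith
  · funext i
    rw [Matrix.add_mulVec, Matrix.smul_mulVec]
    simp only [Pi.add_apply, Pi.smul_apply, hrow, Pi.zero_apply, add_zero, smul_eq_mul]
    rw [hJ i, inv_mul_cancel₀ hn']
  · funext i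
    rw [Matrix.transpose_add, Matrix.transpose_smul, Matrix.add_mulVec,
      Matrix.smul_mulVec]
    simp only [Pi.add_apply, Pi.smul_apply, hcol, Pi.zero_apply, add_zero, smul_eq_mul]
    have : (((Matrix.of fun _ _ => (1 : ℝ)) : Matrix (Fin n) (Fin n) ℝ)ᵀ *ᵥ (fun _ => (1 : ℝ))) i = n := by
      simp [mulVec, dotProduct]
    rw [this, inv_mul_cancel₀ hn']
end

section
/- Let V be an n×(n−1) matrix with orthonormal columns spanning e^⊥ and let Y ∈ 𝕊^{n²}_+ with nonnegative entries be feasible for the Povh–Rendl SDP relaxation (satisfying the constraints of Lemma 6 of Povh–Rendl). Set U = (V^T ⊗ V^T) Y (V ⊗ V). Then ⟨E_{ij} ⊗ I_{n−1}, U⟩ = δ_{ij} and ⟨I_{n−1} ⊗ E_{ij}, U⟩ = δ_{ij} for all 1 ≤ i,j ≤ n−1. -/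
open Matrix Kronecker

/-- For `Y` feasible for the Povh–Rendl SDP relaxation and
`U = (Vᵀ ⊗ Vᵀ) Y (V ⊗ V)`, we have `⟨E_{ij} ⊗ I, U⟩ = δ_{ij}` and
`⟨I ⊗ E_{ij}, U⟩ = δ_{ij}`. -/
theorem projected_U_constraints (n : ℕ)
    (V : Matrix (Fin n) (Fin (n - 1)) ℝ)
    (hVV : Vᵀ * V = 1) (hVe : Vᵀ *ᵥ (fun _ => (1 : ℝ)) = 0)
    (Y : Matrix (Fin n × Fin n) (Fin n × Fin n) ℝ)
    (hpsd : Y.PosSemidef) (hnn : ∀ p q, 0 ≤ Y p q)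
    (h1 : Matrix.trace
      ((((1 : Matrix (Fin n) (Fin n) ℝ) ⊗ₖ ((Matrix.of fun _ _ => (1 : ℝ)) - 1))
        + (((Matrix.of fun _ _ => (1 : ℝ)) - 1) ⊗ₖ (1 : Matrix (Fin n) (Fin n) ℝ)))ᵀ * Y)
      = 0)
    (h2 : ∀ i, ∑ r, Y (i, r) (i, r) = 1)
    (h2' : ∀ r, ∑ i, Y (i, r) (i, r) = 1)
    (h3 : ∀ i j r, ∑ s, Y (i, r) (j, s) = Y (j, r) (j, r))
    (h4 : ∀ j r s, ∑ i, Y (i, r) (j, s) = Y (j, s) (j, s)) :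
    ∀ i j : Fin (n - 1),
      Matrix.trace
        ((Matrix.single i j (1 : ℝ) ⊗ₖ (1 : Matrix (Fin (n - 1)) (Fin (n - 1)) ℝ))ᵀ
          * ((Vᵀ ⊗ₖ Vᵀ) * Y * (V ⊗ₖ V))) = (if i = j then 1 else 0) ∧
      Matrix.trace
        (((1 : Matrix (Fin (n - 1)) (Fin (n - 1)) ℝ) ⊗ₖ Matrix.single i j (1 : ℝ))ᵀ
          * ((Vᵀ ⊗ₖ Vᵀ) * Y * (V ⊗ₖ V))) = (if i = j then 1 else 0) := by
  intro i j
  have hn2 : 2 ≤ n := by have := i.pos; omega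
  have hnR : (n : ℝ) ≠ 0 := Nat.cast_ne_zero.mpr (by omega)
  -- zero pattern from h1
  have hzero : ∀ p q r s : Fin n, ((p = r ∧ q ≠ s) ∨ (p ≠ r ∧ q = s)) →
      Y (p, q) (r, s) = 0 := by
    set C := (((1 : Matrix (Fin n) (Fin n) ℝ) ⊗ₖ ((Matrix.of fun _ _ => (1 : ℝ)) - 1))
          + (((Matrix.of fun _ _ => (1 : ℝ)) - 1) ⊗ₖ (1 : Matrix (Fin n) (Fin n) ℝ)))
      with hCdef
    have hC : ∀ p q r s : Fin n, C (p, q) (r, s) =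
        (if p = r then 1 else 0) * (1 - if q = s then (1:ℝ) else 0)
          + (1 - if p = r then (1:ℝ) else 0) * (if q = s then 1 else 0) := by
      intro p q r s
      simp [hCdef, Matrix.kroneckerMap_apply, Matrix.one_apply, Matrix.sub_apply]
    have h1' : ∑ x : (Fin n × Fin n) × (Fin n × Fin n), C x.1 x.2 * Y x.1 x.2 = 0 := by
      rw [← h1]
      rw [Fintype.sum_prod_type]
      simp only [Matrix.trace, Matrix.mul_apply, Matrix.diag, Matrix.transpose_apply]
      rw [Finset.sum_comm]
    have hz := (Finset.sum_eq_zero_iff_of_nonneg (by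
      intro x _
      have := hnn x.1 x.2
      have hc : 0 ≤ C x.1 x.2 := by
        obtain ⟨⟨p, q⟩, r, s⟩ := x
        rw [hC]
        split_ifs <;> norm_num
      positivity)).mp h1'
    intro p q r s h
    have key := hz ((p, q), (r, s)) (Finset.mem_univ _)
    rw [hC] at key
    rcases h with ⟨ha, hb⟩ | ⟨ha, hb⟩
    · simpa [if_pos ha, if_neg hb] using key
    · simpa [if_neg ha, if_pos hb] using key
  -- diagonal sums
  have key1 : ∀ p r : Fin n, ∑ q, Y (p, q) (r, q) = if p = r then 1 else 0 := by
    intro p r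
    by_cases h : p = r
    · subst h; simp [h2 p]
    · rw [if_neg h]
      exact Finset.sum_eq_zero fun q _ => hzero p q r q (Or.inr ⟨h, rfl⟩)
  have key1' : ∀ q s : Fin n, ∑ p, Y (p, q) (p, s) = if q = s then 1 else 0 := by
    intro q s
    by_cases h : q = s
    · subst h; simp [h2' q]
    · rw [if_neg h]
      exact Finset.sum_eq_zero fun p _ => hzero p q p s (Or.inl ⟨rfl, h⟩)
  -- full sums
  have hYsum1 : ∀ p r : Fin n, ∑ q, ∑ s, Y (r, s) (p, q) = 1 := by
    intro p r
    rw [Finset.sum_comm]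
    calc ∑ s, ∑ q, Y (r, s) (p, q) = ∑ s, Y (p, s) (p, s) :=
          Finset.sum_congr rfl fun s _ => h3 r p s
      _ = 1 := h2 p
  have hYsum2 : ∀ q s : Fin n, ∑ p, ∑ r, Y (r, s) (p, q) = 1 := by
    intro q s
    calc ∑ p, ∑ r, Y (r, s) (p, q) = ∑ p, Y (p, q) (p, q) :=
          Finset.sum_congr rfl fun p _ => h4 p s q
      _ = 1 := h2' q
  -- V Vᵀ = I - (1/n) J
  have hP : ∀ q s : Fin n, (V * Vᵀ) q s = (if q = s then 1 else 0) - (n:ℝ)⁻¹ := by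
    set J : Matrix (Fin n) (Fin n) ℝ := Matrix.of fun _ _ => 1 with hJdef
    set R : Matrix (Fin n) (Fin n) ℝ := 1 - (V * Vᵀ + (n:ℝ)⁻¹ • J) with hRdef
    have hVJ : Vᵀ * J = 0 := by
      ext a b
      have := congrFun hVe a
      simpa [Matrix.mul_apply, hJdef, Matrix.mulVec, dotProduct] using this
    have hJV : J * V = 0 := by
      have := congrArg Matrix.transpose hVJ
      rwa [Matrix.transpose_mul, Matrix.transpose_transpose, Matrix.transpose_zero,
        show Jᵀ = J from by ext a b; rfl] at this
    have hJJ : J * J = (n:ℝ) • J := by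
      ext a b
      simp [hJdef, Matrix.mul_apply, Matrix.smul_apply]
    have hQQ : (V * Vᵀ + (n:ℝ)⁻¹ • J) * (V * Vᵀ + (n:ℝ)⁻¹ • J)
        = V * Vᵀ + (n:ℝ)⁻¹ • J := by
      have e1 : V * Vᵀ * (V * Vᵀ) = V * Vᵀ := by
        calc V * Vᵀ * (V * Vᵀ) = V * (Vᵀ * V) * Vᵀ := by
              rw [Matrix.mul_assoc, Matrix.mul_assoc, Matrix.mul_assoc]
          _ = V * Vᵀ := by rw [hVV, Matrix.mul_one]
      have e2 : V * Vᵀ * ((n:ℝ)⁻¹ • J) = 0 := by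
        rw [Matrix.mul_smul, Matrix.mul_assoc, hVJ, Matrix.mul_zero, smul_zero]
      have e3 : ((n:ℝ)⁻¹ • J) * (V * Vᵀ) = 0 := by
        rw [Matrix.smul_mul, ← Matrix.mul_assoc, hJV, Matrix.zero_mul, smul_zero]
      have e4 : ((n:ℝ)⁻¹ • J) * ((n:ℝ)⁻¹ • J) = (n:ℝ)⁻¹ • J := by
        rw [Matrix.smul_mul, Matrix.mul_smul, hJJ, smul_smul, smul_smul]
        congr 1
        field_simp
      rw [Matrix.add_mul, Matrix.mul_add, Matrix.mul_add, e1, e2, e3, e4]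
      simp
    have hRsymm : Rᵀ = R := by
      rw [hRdef]
      simp [Matrix.transpose_sub, Matrix.transpose_add, Matrix.transpose_smul,
        Matrix.transpose_mul]
      ext a b
      simp [hJdef]
    have hRR : R * R = R := by
      rw [hRdef]
      rw [Matrix.sub_mul, Matrix.mul_sub, Matrix.mul_sub, hQQ]
      simp
    have htr : Matrix.trace R = 0 := by
      rw [hRdef]
      have e1 : Matrix.trace (V * Vᵀ) = ((n:ℕ) - 1 : ℝ) := by
        rw [Matrix.trace_mul_comm, hVV]
        simp [Matrix.trace_one]
        rw [Nat.cast_sub (by omega)]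
        simp
      have e2 : Matrix.trace ((n:ℝ)⁻¹ • J) = 1 := by
        simp [Matrix.trace, Matrix.diag, hJdef]
        field_simp
      rw [Matrix.trace_sub, Matrix.trace_add, e1, e2, Matrix.trace_one]
      simp
    have hR0 : R = 0 := by
      have hdiag : ∀ x, R x x = ∑ y, (R x y)^2 := by
        intro x
        conv_lhs => rw [← hRR]
        rw [Matrix.mul_apply]
        exact Finset.sum_congr rfl fun y _ => by
          rw [sq, ← congrFun (congrFun hRsymm y) x]
          rfl
      have hsum : ∑ x, ∑ y, (R x y)^2 = 0 := by
        rw [← htr]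
        simp [Matrix.trace, Matrix.diag]
        exact (Finset.sum_congr rfl fun x _ => (hdiag x).symm)
      ext a b
      have h := (Finset.sum_eq_zero_iff_of_nonneg (fun x _ =>
        Finset.sum_nonneg fun y _ => sq_nonneg _)).mp hsum a (Finset.mem_univ _)
      have h2 := (Finset.sum_eq_zero_iff_of_nonneg (fun y _ => sq_nonneg _)).mp h b
        (Finset.mem_univ _)
      simpa using sq_eq_zero_iff.mp h2
    intro q s
    have := congrFun (congrFun hR0 q) s
    rw [hRdef] at this
    simp [Matrix.sub_apply, Matrix.add_apply, Matrix.one_apply, Matrix.smul_apply,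
      hJdef] at this
    linarith [this]
  -- trace expansion lemma
  have aux : ∀ A B : Matrix (Fin n) (Fin n) ℝ, Matrix.trace ((A ⊗ₖ B) * Y)
      = ∑ p, ∑ r, A p r * ∑ q, ∑ s, B q s * Y (r, s) (p, q) := by
    intro A B
    calc Matrix.trace ((A ⊗ₖ B) * Y)
        = ∑ p, ∑ q, ∑ r, ∑ s, A p r * (B q s * Y (r, s) (p, q)) := by
          simp [Matrix.trace, Matrix.mul_apply, Matrix.diag, Fintype.sum_prod_type,
            Matrix.kroneckerMap_apply, mul_assoc]
      _ = ∑ p, ∑ r, ∑ q, ∑ s, A p r * (B q s * Y (r, s) (p, q)) :=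
          Finset.sum_congr rfl fun p _ => Finset.sum_comm
      _ = ∑ p, ∑ r, A p r * ∑ q, ∑ s, B q s * Y (r, s) (p, q) := by
          simp [Finset.mul_sum]
  -- the matrix A = V Eᵀ Vᵀ
  set E := Matrix.single i j (1 : ℝ) with hEdef
  set A := V * Eᵀ * Vᵀ with hAdef
  have htrA : Matrix.trace A = if i = j then 1 else 0 := by
    rw [hAdef, Matrix.trace_mul_cycle, hVV, Matrix.one_mul, Matrix.trace_transpose,
      hEdef]
    by_cases h : i = j
    · subst h; rw [if_pos rfl]; exact Matrix.trace_single_eq_same i (1:ℝ)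
    · rw [if_neg h]; exact Matrix.trace_single_eq_of_ne i j 1 h
  have hsumA : ∑ p, ∑ r, A p r = 0 := by
    have hAe : A *ᵥ (fun _ => (1:ℝ)) = 0 := by
      rw [hAdef, ← Matrix.mulVec_mulVec, hVe, Matrix.mulVec_zero]
    calc ∑ p, ∑ r, A p r = ∑ p, (A *ᵥ fun _ => (1:ℝ)) p := by
          simp [Matrix.mulVec, dotProduct]
      _ = 0 := by rw [hAe]; simp
  -- the inner sum against V Vᵀ
  have hinner : ∀ p r : Fin n, ∑ q, ∑ s, (V * Vᵀ) q s * Y (r, s) (p, q)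
      = (if r = p then 1 else 0) - (n:ℝ)⁻¹ := by
    intro p r
    have : ∀ q : Fin n, ∑ s, (V * Vᵀ) q s * Y (r, s) (p, q)
        = (∑ s, (if q = s then 1 else 0) * Y (r, s) (p, q))
          - (n:ℝ)⁻¹ * ∑ s, Y (r, s) (p, q) := by
      intro q
      rw [Finset.mul_sum, ← Finset.sum_sub_distrib]
      exact Finset.sum_congr rfl fun s _ => by rw [hP q s]; ring
    rw [Finset.sum_congr rfl fun q _ => this q, Finset.sum_sub_distrib,
      ← Finset.mul_sum]
    have e1 : ∑ q, ∑ s, (if q = s then (1:ℝ) else 0) * Y (r, s) (p, q)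
        = if r = p then 1 else 0 := by
      simp only [ite_mul, one_mul, zero_mul, Finset.sum_ite_eq, Finset.mem_univ,
        if_true]
      exact key1 r p
    rw [e1, hYsum1 p r, mul_one]
  constructor
  -- first goal
  · have step : (E ⊗ₖ (1 : Matrix (Fin (n-1)) (Fin (n-1)) ℝ))ᵀ
        * ((Vᵀ ⊗ₖ Vᵀ) * Y * (V ⊗ₖ V))
        = (Eᵀ ⊗ₖ (1 : Matrix (Fin (n-1)) (Fin (n-1)) ℝ)) * ((Vᵀ ⊗ₖ Vᵀ) * Y * (V ⊗ₖ V)) := by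
      rw [← Matrix.kroneckerMap_transpose, Matrix.transpose_one]
    rw [step]
    have cyc : Matrix.trace ((Eᵀ ⊗ₖ (1 : Matrix (Fin (n-1)) (Fin (n-1)) ℝ))
          * ((Vᵀ ⊗ₖ Vᵀ) * Y * (V ⊗ₖ V)))
        = Matrix.trace ((A ⊗ₖ (V * Vᵀ)) * Y) := by
      rw [← Matrix.mul_assoc, Matrix.trace_mul_comm, ← Matrix.mul_assoc,
        ← Matrix.mul_assoc]
      congr 1
      rw [← Matrix.mul_kronecker_mul, ← Matrix.mul_kronecker_mul, hAdef]
      simp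
    rw [cyc, aux]
    calc ∑ p, ∑ r, A p r * ∑ q, ∑ s, (V * Vᵀ) q s * Y (r, s) (p, q)
        = ∑ p, ∑ r, (A p r * (if r = p then 1 else 0) - (n:ℝ)⁻¹ * A p r) := by
          refine Finset.sum_congr rfl fun p _ => Finset.sum_congr rfl fun r _ => ?_
          rw [hinner p r]; ring
      _ = (∑ p, ∑ r, A p r * (if r = p then 1 else 0))
            - (n:ℝ)⁻¹ * ∑ p, ∑ r, A p r := by
          rw [Finset.mul_sum]
          rw [← Finset.sum_sub_distrib]
          refine Finset.sum_congr rfl fun p _ => ?_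
          rw [Finset.mul_sum, ← Finset.sum_sub_distrib]
      _ = Matrix.trace A - (n:ℝ)⁻¹ * 0 := by
          rw [hsumA]
          congr 1
          simp [Matrix.trace, Matrix.diag, mul_ite]
      _ = if i = j then 1 else 0 := by rw [htrA]; ring
  -- second goal
  · have step : ((1 : Matrix (Fin (n-1)) (Fin (n-1)) ℝ) ⊗ₖ E)ᵀ
        * ((Vᵀ ⊗ₖ Vᵀ) * Y * (V ⊗ₖ V))
        = ((1 : Matrix (Fin (n-1)) (Fin (n-1)) ℝ) ⊗ₖ Eᵀ) * ((Vᵀ ⊗ₖ Vᵀ) * Y * (V ⊗ₖ V)) := by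
      rw [← Matrix.kroneckerMap_transpose, Matrix.transpose_one]
    rw [step]
    have cyc : Matrix.trace (((1 : Matrix (Fin (n-1)) (Fin (n-1)) ℝ) ⊗ₖ Eᵀ)
          * ((Vᵀ ⊗ₖ Vᵀ) * Y * (V ⊗ₖ V)))
        = Matrix.trace (((V * Vᵀ) ⊗ₖ A) * Y) := by
      rw [← Matrix.mul_assoc, Matrix.trace_mul_comm, ← Matrix.mul_assoc,
        ← Matrix.mul_assoc]
      congr 1
      rw [← Matrix.mul_kronecker_mul, ← Matrix.mul_kronecker_mul, hAdef]
      simp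
    rw [cyc, aux]
    have swap_out : ∀ f : Fin n → Fin n → Fin n → ℝ,
        ∑ p, ∑ q, ∑ s, f p q s = ∑ q, ∑ s, ∑ p, f p q s := by
      intro f
      rw [Finset.sum_comm]
      exact Finset.sum_congr rfl fun q _ => Finset.sum_comm
    calc ∑ p, ∑ r, (V * Vᵀ) p r * ∑ q, ∑ s, A q s * Y (r, s) (p, q)
        = ∑ p, ∑ r, ((if p = r then 1 else 0) * (∑ q, ∑ s, A q s * Y (r, s) (p, q))
            - (n:ℝ)⁻¹ * ∑ q, ∑ s, A q s * Y (r, s) (p, q)) := by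
          refine Finset.sum_congr rfl fun p _ => Finset.sum_congr rfl fun r _ => ?_
          rw [hP p r]; ring
      _ = (∑ p, ∑ q, ∑ s, A q s * Y (p, s) (p, q))
            - (n:ℝ)⁻¹ * ∑ p, ∑ r, ∑ q, ∑ s, A q s * Y (r, s) (p, q) := by
          rw [Finset.mul_sum, ← Finset.sum_sub_distrib]
          refine Finset.sum_congr rfl fun p _ => ?_
          rw [Finset.sum_sub_distrib, ← Finset.mul_sum]
          congr 1
          simp [Finset.sum_ite_eq, Finset.mem_univ]
      _ = (∑ q, ∑ s, A q s * ∑ p, Y (p, s) (p, q))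
            - (n:ℝ)⁻¹ * ∑ q, ∑ s, A q s * ∑ p, ∑ r, Y (r, s) (p, q) := by
          congr 1
          · rw [swap_out]
            exact Finset.sum_congr rfl fun q _ => Finset.sum_congr rfl fun s _ =>
              (Finset.mul_sum _ _ _).symm
          · congr 1
            rw [show (∑ p, ∑ r, ∑ q, ∑ s, A q s * Y (r, s) (p, q))
                = ∑ p, ∑ q, ∑ s, A q s * ∑ r, Y (r, s) (p, q) by
              refine Finset.sum_congr rfl fun p _ => ?_
              rw [Finset.sum_comm]
              exact Finset.sum_congr rfl fun q _ => by
                rw [Finset.sum_comm]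
                exact Finset.sum_congr rfl fun s _ => (Finset.mul_sum _ _ _).symm]
            rw [swap_out]
            refine Finset.sum_congr rfl fun q _ => Finset.sum_congr rfl fun s _ => ?_
            rw [← Finset.mul_sum]
      _ = Matrix.trace A - (n:ℝ)⁻¹ * ∑ q, ∑ s, A q s := by
          congr 1
          · rw [show (∑ q, ∑ s, A q s * ∑ p, Y (p, s) (p, q))
                = ∑ q, ∑ s, A q s * (if s = q then 1 else 0) by
              exact Finset.sum_congr rfl fun q _ => Finset.sum_congr rfl fun s _ => by
                rw [key1' s q]]
            simp [Matrix.trace, Matrix.diag, mul_ite, Finset.sum_ite_eq, Finset.mem_univ]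
          · congr 1
            exact Finset.sum_congr rfl fun q _ => Finset.sum_congr rfl fun s _ => by
              rw [hYsum2 q s, mul_one]
      _ = if i = j then 1 else 0 := by
          rw [htrA, hsumA]
          ring
end

section
/- Let X_0 = vec(I_n)vec(I_n)^T and let ℒ^⊥ be the span of the constraint matrices {I_n ⊗ E_{jj} : j ∈ [n]} ∪ {E_{jj} ⊗ I_n : j ∈ [n]} ∪ {T, J_{n²}}, where T = I_n ⊗ (J_n − I_n) + (J_n − I_n) ⊗ I_n. Then the orthogonal projection of X_0 onto ℒ^⊥ equals (1/(n²−n))(J_{n²} − I_{n²} − T) + (1/n) I_{n²}. -/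
open Matrix Kronecker

/-- The all-ones matrix `J_{n²}`. -/
def bigJ (n : ℕ) : Matrix (Fin n × Fin n) (Fin n × Fin n) ℝ :=
  Matrix.of fun _ _ => 1

/-- The constraint matrix `T = I ⊗ (J - I) + (J - I) ⊗ I`. -/
def bigT (n : ℕ) : Matrix (Fin n × Fin n) (Fin n × Fin n) ℝ :=
  (1 : Matrix (Fin n) (Fin n) ℝ) ⊗ₖ ((Matrix.of fun _ _ => (1 : ℝ)) - 1)
    + ((Matrix.of fun _ _ => (1 : ℝ)) - 1) ⊗ₖ (1 : Matrix (Fin n) (Fin n) ℝ)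

/-- `X₀ = vec(I_n) vec(I_n)ᵀ`. -/
def bigX0 (n : ℕ) : Matrix (Fin n × Fin n) (Fin n × Fin n) ℝ :=
  Matrix.vecMulVec (fun p => if p.1 = p.2 then 1 else 0)
    (fun p => if p.1 = p.2 then 1 else 0)

/-- `ℒ^⊥`: the span of the constraint matrices. -/
def Lperp (n : ℕ) : Submodule ℝ (Matrix (Fin n × Fin n) (Fin n × Fin n) ℝ) :=
  Submodule.span ℝ
    ({M | ∃ j : Fin n,
        M = (1 : Matrix (Fin n) (Fin n) ℝ) ⊗ₖ Matrix.single j j (1 : ℝ)} ∪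
     {M | ∃ j : Fin n,
        M = Matrix.single j j (1 : ℝ) ⊗ₖ (1 : Matrix (Fin n) (Fin n) ℝ)} ∪
     {bigT n, bigJ n})

private lemma trace_tmul_aux {m : Type*} [Fintype m] (A B : Matrix m m ℝ) :
    (Aᵀ * B).trace = ∑ p, ∑ q, A q p * B q p := by
  simp [Matrix.trace, Matrix.mul_apply, Matrix.diag]

/-- The orthogonal projection of `X₀` onto `ℒ^⊥` (with respect to the trace inner
product) equals `(1/(n²-n))(J - I - T) + (1/n) I`: it lies in `ℒ^⊥` and the residual
is orthogonal to `ℒ^⊥`. -/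
theorem X0_projection (n : ℕ) (hn : 1 < n) :
    (((n : ℝ) ^ 2 - n)⁻¹ • (bigJ n - 1 - bigT n) + (n : ℝ)⁻¹ • 1 ∈ Lperp n) ∧
    ∀ M ∈ Lperp n,
      Matrix.trace
        ((bigX0 n - (((n : ℝ) ^ 2 - n)⁻¹ • (bigJ n - 1 - bigT n) + (n : ℝ)⁻¹ • 1))ᵀ * M)
        = 0 := by
  have hn0 : (n:ℝ) ≠ 0 := Nat.cast_ne_zero.mpr (by omega)
  have h2 : (n:ℝ)^2 - (n:ℝ) ≠ 0 := by
    have he : (n:ℝ) ^ 2 - n = n * (n - 1) := by ring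
    rw [he]
    exact mul_ne_zero hn0 (sub_ne_zero.mpr (by exact_mod_cast hn.ne'))
  constructor
  · have h1 : (1 : Matrix (Fin n × Fin n) (Fin n × Fin n) ℝ) ∈ Lperp n := by
      have he : (1 : Matrix (Fin n × Fin n) (Fin n × Fin n) ℝ)
          = ∑ j : Fin n, (1 : Matrix (Fin n) (Fin n) ℝ) ⊗ₖ Matrix.single j j (1:ℝ) := by
        ext ⟨a,b⟩ ⟨c,d⟩
        simp only [Matrix.one_apply, Matrix.single, Prod.ext_iff, Matrix.sum_apply,
          kroneckerMap_apply, Matrix.of_apply, mul_ite, mul_one, mul_zero, ite_and]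
        by_cases h : a = c <;> simp [h, Finset.sum_ite_eq']
      rw [he]
      exact Submodule.sum_mem _ fun j _ =>
        Submodule.subset_span (Or.inl (Or.inl ⟨j, rfl⟩))
    have hJ : bigJ n ∈ Lperp n :=
      Submodule.subset_span (Or.inr (Set.mem_insert_iff.mpr (Or.inr rfl)))
    have hT : bigT n ∈ Lperp n := Submodule.subset_span (Or.inr (Set.mem_insert _ _))
    exact Submodule.add_mem _
      (Submodule.smul_mem _ _ (Submodule.sub_mem _ (Submodule.sub_mem _ hJ h1) hT))
      (Submodule.smul_mem _ _ h1)
  · intro M hM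
    induction hM using Submodule.span_induction with
    | mem x hx =>
        obtain ((⟨j, rfl⟩ | ⟨j, rfl⟩) | hx) := hx
        · rw [trace_tmul_aux]
          simp only [Matrix.sub_apply, Matrix.add_apply, Matrix.smul_apply, bigX0, bigJ, bigT,
            Matrix.vecMulVec_apply, Matrix.one_apply, Matrix.of_apply, kroneckerMap_apply,
            Matrix.single, smul_eq_mul, Fintype.sum_prod_type, Prod.mk.injEq, ite_and,
            mul_ite, mul_one, mul_zero, ite_mul, zero_mul, one_mul]
          simp only [Finset.sum_ite_eq, Finset.sum_ite_eq', Finset.mem_univ, if_true,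
            Finset.sum_ite_irrel, Finset.sum_const_zero]
          simp [Finset.sum_sub_distrib, Finset.sum_ite_eq, Finset.card_univ, hn0, ite_self]
        · rw [trace_tmul_aux]
          simp only [Matrix.sub_apply, Matrix.add_apply, Matrix.smul_apply, bigX0, bigJ, bigT,
            Matrix.vecMulVec_apply, Matrix.one_apply, Matrix.of_apply, kroneckerMap_apply,
            Matrix.single, smul_eq_mul, Fintype.sum_prod_type, Prod.mk.injEq, ite_and,
            mul_ite, mul_one, mul_zero, ite_mul, zero_mul, one_mul]
          simp only [Finset.sum_ite_eq, Finset.sum_ite_eq', Finset.mem_univ, if_true,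
            Finset.sum_ite_irrel, Finset.sum_const_zero]
          simp [Finset.sum_sub_distrib, Finset.sum_ite_eq, Finset.card_univ, hn0, ite_self]
        · rcases hx with rfl | rfl <;>
          · rw [trace_tmul_aux]
            simp only [Matrix.sub_apply, Matrix.add_apply, Matrix.smul_apply, bigX0, bigJ, bigT,
              Matrix.vecMulVec_apply, Matrix.one_apply, Matrix.of_apply, kroneckerMap_apply,
              Matrix.single, smul_eq_mul, Fintype.sum_prod_type, Prod.mk.injEq, ite_and,
              mul_ite, mul_one, mul_zero, ite_mul, zero_mul, one_mul]
            simp only [Finset.sum_ite_irrel, Finset.sum_sub_distrib, Finset.sum_add_distrib,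
              Finset.sum_ite_eq, Finset.sum_ite_eq', Finset.mem_univ, if_true, Finset.sum_const,
              Finset.sum_const_zero, Finset.card_univ, Fintype.card_fin, nsmul_eq_mul,
              Finset.mul_sum, Finset.sum_mul, mul_sub, sub_mul, mul_add, add_mul,
              mul_ite, ite_mul, mul_zero, zero_mul, mul_one, one_mul]
            have h3 : (-1 + (n:ℝ)) ≠ 0 := by
              have : (1:ℝ) < n := by exact_mod_cast hn
              linarith
            field_simp
            try ring
            all_goals (field_simp; ring)
    | zero => simp
    | add x y hx hy ihx ihy => rw [Matrix.mul_add, Matrix.trace_add, ihx, ihy, add_zero]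
    | smul c x hx ih => rw [Matrix.mul_smul, Matrix.trace_smul, ih, smul_zero]
end
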